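/- (Abstract core of the Potential Reconstruction Error Estimate, Section 4.4.) Let μ†, μ̂ ∈ L^∞(X) and u†, u_h†, û, û_h ∈ L²(X), and let C_s > 0. Assume: (i) stability: ‖μ̂ − μ†‖_{L^∞} ≤ C_s ‖Q[μ̂ · û] − Q[μ† · u†]‖_{L²}; (ii) quasi-minimality of the estimate: ‖Q[μ̂ · û_h] − Q[μ† · u†]‖_{L²} ≤ ‖Q[μ† · u_h†] − Q[μ† · u†]‖_{L²}; (iii) smallness of the surrogate error: C_s C_Q ‖û − û_h‖_{L²} ≤ 1/2. Then ‖μ̂ − μ†‖_{L^∞} ≤ 2 C_s C_Q ‖μ†‖_{L^∞} ( ‖u† − u_h†‖_{L²} + ‖û − û_h‖_{L²} ). -/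

import Mathlib

open MeasureTheory

lemma prod_toLp_sub_norm_le {X : Type*} [MeasurableSpace X] {m : Measure X}
    (μ : Lp ℝ ⊤ m) (u v : Lp ℝ 2 m)
    (h : MemLp (fun x => μ x * u x) 2 m) (h' : MemLp (fun x => μ x * v x) 2 m) :
    ‖h.toLp _ - h'.toLp _‖ ≤ ‖μ‖ * ‖u - v‖ := by
  rw [← MemLp.toLp_sub h h', Lp.norm_toLp _ (h.sub h')]
  have hae : ((fun x => μ x * u x) - fun x => μ x * v x)
      =ᵐ[m] fun x => μ x * ((u - v : Lp ℝ 2 m) x) := by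
    filter_upwards [Lp.coeFn_sub u v] with x hx
    simp only [Pi.sub_apply, hx, mul_sub]
  rw [eLpNorm_congr_ae hae]
  have hb : eLpNorm (fun x => μ x * ((u - v : Lp ℝ 2 m) x)) 2 m ≤
      eLpNorm (μ : X → ℝ) ⊤ m * eLpNorm ((u - v : Lp ℝ 2 m) : X → ℝ) 2 m :=
    by simpa using eLpNorm_le_eLpNorm_top_mul_eLpNorm 2 (μ : X → ℝ)
        (Lp.aestronglyMeasurable (u - v : Lp ℝ 2 m))
        (· * ·) 1 (Filter.Eventually.of_forall fun x => by simp [nnnorm_mul])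
  calc (eLpNorm (fun x => μ x * ((u - v : Lp ℝ 2 m) x)) 2 m).toReal
      ≤ (eLpNorm (μ : X → ℝ) ⊤ m * eLpNorm ((u - v : Lp ℝ 2 m) : X → ℝ) 2 m).toReal := by
        refine ENNReal.toReal_mono ?_ hb
        exact ENNReal.mul_ne_top (Lp.eLpNorm_ne_top μ) (Lp.eLpNorm_ne_top (u - v))
    _ = ‖μ‖ * ‖u - v‖ := by
        rw [ENNReal.toReal_mul, Lp.norm_def, Lp.norm_def]

/-- Abstract core of the Potential Reconstruction Error Estimate
(Section 4.4): if the stability estimate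
`‖μ̂ − μ†‖_{L^∞} ≤ C_s ‖Q[μ̂ û] − Q[μ† u†]‖_{L²}` holds, the estimate is quasi-minimal,
`‖Q[μ̂ û_h] − Q[μ† u†]‖_{L²} ≤ ‖Q[μ† u_h†] − Q[μ† u†]‖_{L²}`, and the surrogate error is
small, `C_s C_Q ‖û − û_h‖_{L²} ≤ 1/2`, then
`‖μ̂ − μ†‖_{L^∞} ≤ 2 C_s C_Q ‖μ†‖_{L^∞} (‖u† − u_h†‖_{L²} + ‖û − û_h‖_{L²})`.
Here `Q` is a bounded linear operator on `L²` with `‖Q‖ ≤ C_Q`, `μ†, μ̂ ∈ L^∞`,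
`u†, u_h†, û, û_h ∈ L²`, and `μ · u` denotes the pointwise product. -/
theorem potential_reconstruction_error_estimate
    {X : Type*} [MeasurableSpace X] (m : Measure X)
    (μt μh : Lp ℝ ⊤ m) (ut uth uh uhh : Lp ℝ 2 m)
    (h1 : MemLp (fun x => μh x * uh x) 2 m)
    (h2 : MemLp (fun x => μh x * uhh x) 2 m)
    (h3 : MemLp (fun x => μt x * ut x) 2 m)
    (h4 : MemLp (fun x => μt x * uth x) 2 m)
    (Q : Lp ℝ 2 m →L[ℝ] Lp ℝ 2 m) (CQ : ℝ) (hCQ : ‖Q‖ ≤ CQ)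
    (Cs : ℝ) (hCs : 0 < Cs)
    (stab : ‖μh - μt‖ ≤ Cs * ‖Q (h1.toLp _) - Q (h3.toLp _)‖)
    (qmin : ‖Q (h2.toLp _) - Q (h3.toLp _)‖ ≤ ‖Q (h4.toLp _) - Q (h3.toLp _)‖)
    (small : Cs * CQ * ‖uh - uhh‖ ≤ 1 / 2) :
    ‖μh - μt‖ ≤ 2 * Cs * CQ * ‖μt‖ * (‖ut - uth‖ + ‖uh - uhh‖) := by
  have hCQ0 : (0 : ℝ) ≤ CQ := le_trans (norm_nonneg Q) hCQ
  -- bounds on the two Q differences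
  have key : ∀ (f g : Lp ℝ 2 m), ‖Q f - Q g‖ ≤ CQ * ‖f - g‖ := by
    intro f g
    rw [← map_sub]
    calc ‖Q (f - g)‖ ≤ ‖Q‖ * ‖f - g‖ := Q.le_opNorm _
      _ ≤ CQ * ‖f - g‖ := by gcongr
  have b12 : ‖Q (h1.toLp _) - Q (h2.toLp _)‖ ≤ CQ * (‖μh‖ * ‖uh - uhh‖) :=
    le_trans (key _ _) (by
      have := prod_toLp_sub_norm_le μh uh uhh h1 h2
      gcongr)
  have b43 : ‖Q (h4.toLp _) - Q (h3.toLp _)‖ ≤ CQ * (‖μt‖ * ‖uth - ut‖) :=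
    le_trans (key _ _) (by
      have := prod_toLp_sub_norm_le μt uth ut h4 h3
      gcongr)
  have tri : ‖Q (h1.toLp _) - Q (h3.toLp _)‖ ≤
      ‖Q (h1.toLp _) - Q (h2.toLp _)‖ + ‖Q (h2.toLp _) - Q (h3.toLp _)‖ := by
    simpa using norm_sub_le_norm_sub_add_norm_sub (Q (h1.toLp _)) (Q (h2.toLp _)) (Q (h3.toLp _))
  have hμh : ‖μh‖ ≤ ‖μh - μt‖ + ‖μt‖ := by
    simpa using norm_add_le (μh - μt) μt
  have hts : ‖uth - ut‖ = ‖ut - uth‖ := norm_sub_rev _ _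
  have main : ‖μh - μt‖ ≤ Cs * (CQ * (‖μh‖ * ‖uh - uhh‖) + CQ * (‖μt‖ * ‖ut - uth‖)) := by
    refine le_trans stab ?_
    have : ‖Q (h1.toLp _) - Q (h3.toLp _)‖ ≤
        CQ * (‖μh‖ * ‖uh - uhh‖) + CQ * (‖μt‖ * ‖ut - uth‖) := by
      calc ‖Q (h1.toLp _) - Q (h3.toLp _)‖
          ≤ ‖Q (h1.toLp _) - Q (h2.toLp _)‖ + ‖Q (h2.toLp _) - Q (h3.toLp _)‖ := tri
        _ ≤ CQ * (‖μh‖ * ‖uh - uhh‖) + CQ * (‖μt‖ * ‖uth - ut‖) :=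
            add_le_add b12 (le_trans qmin b43)
        _ = CQ * (‖μh‖ * ‖uh - uhh‖) + CQ * (‖μt‖ * ‖ut - uth‖) := by rw [hts]
    gcongr
  nlinarith [norm_nonneg (μh - μt), norm_nonneg μt, norm_nonneg (ut - uth),
    norm_nonneg (uh - uhh), mul_nonneg hCs.le hCQ0,
    mul_le_mul_of_nonneg_left hμh (mul_nonneg (mul_nonneg hCs.le hCQ0) (norm_nonneg (uh - uhh)))]
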